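/- Let A be a strictly upper-triangular 0–1 n×n adjacency matrix of a directed acyclic graph on {1,…,n}, T = sgn((I − A)^{-1}) its transitive closure matrix, T_{n−1} the upper-left (n−1)×(n−1) block of T, t_n ∈ ℝ^{n−1} the first n−1 entries of the n-th column of T, and w_n = T_{n−1}^{-1} t_n. For γ = (γ_1,…,γ_{n−1}) ∈ ℝ^{n−1} define l_m(γ) = Σ_{j=1}^{n−1} T(j,m) γ_j for m = 1,…,n−1, and let H_n = {m < n : A(m,n) = 1} be the set of one-hop neighbors of node n. Then there exists a function g : ℝ^{H_n} → ℝ such that Σ_{j < n : T(j,n) = 1} γ_j = g( (l_m(γ))_{m ∈ H_n} ) for ALL γ ∈ ℝ^{n−1} if and only if w_n(j) = 0 for every j < n with A(j,n) = 0. -/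

import Mathlib

open Matrix Finset

/-- The transitive closure matrix `T = sgn((I − A)⁻¹)`, where `sgn` is applied
entrywise, mapping nonzero entries to `1` and zero entries to `0`. -/
noncomputable def transClosure {n : ℕ} (A : Matrix (Fin n) (Fin n) ℝ) :
    Matrix (Fin n) (Fin n) ℝ :=
  Matrix.of fun i j => if (1 - A)⁻¹ i j = 0 then 0 else 1

/-- Theorem 5 (Achievability of Fair Rating). Nodes are `{0, …, m}` (so `n = m + 1`
nodes, the last node being `Fin.last m`). With `T` the transitive closure of the
strictly upper-triangular 0–1 adjacency matrix `A`, `Tb` its upper-left `m × m`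
block, `t` the first `m` entries of its last column, and `w = Tb⁻¹ t`, the fair
rating `Σ_{j : T(j,last)=1} γ_j` can be computed as a function of the aggregated
log beliefs `(l_q(γ))_{q ∈ H}` of the one-hop neighbors `H = {q : A(q,last) = 1}`
alone, for ALL `γ`, if and only if `w` vanishes on every node `j` with
`A(j, last) = 0`. -/
theorem achievabilityOfFairRating
    (m : ℕ) (A : Matrix (Fin (m + 1)) (Fin (m + 1)) ℝ)
    (h01 : ∀ i j, A i j = 0 ∨ A i j = 1)
    (hlt : ∀ i j, A i j ≠ 0 → i < j) :
    let T := transClosure A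
    let Tb : Matrix (Fin m) (Fin m) ℝ :=
      Matrix.of fun i j => T (Fin.castSucc i) (Fin.castSucc j)
    let t : Fin m → ℝ := fun i => T (Fin.castSucc i) (Fin.last m)
    let w : Fin m → ℝ := Tb⁻¹ *ᵥ t
    let l : (Fin m → ℝ) → Fin m → ℝ := fun γ q =>
      ∑ j, T (Fin.castSucc j) (Fin.castSucc q) * γ j
    ((∃ g : ({q : Fin m // A (Fin.castSucc q) (Fin.last m) = 1} → ℝ) → ℝ,
        ∀ γ : Fin m → ℝ,
          (∑ j ∈ Finset.univ.filter
            (fun j : Fin m => T (Fin.castSucc j) (Fin.last m) = 1), γ j) =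
            g (fun q => l γ q.1)) ↔
      (∀ j : Fin m, A (Fin.castSucc j) (Fin.last m) = 0 → w j = 0)) := by
  intro T Tb t w l
  -- `1 - A` is upper triangular with unit diagonal
  have hAdiag : ∀ i, A i i = 0 := by
    intro i
    by_contra h
    exact lt_irrefl i (hlt i i h)
  have hA : (1 - A).BlockTriangular id := by
    intro i j hij
    have hij' : j < i := hij
    have hAij : A i j = 0 := by
      by_contra h
      exact absurd (hlt i j h) (not_lt.2 (le_of_lt hij'))
    simp [Matrix.sub_apply, Matrix.one_apply_ne (ne_of_gt hij'), hAij]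
  have hdetA : (1 - A).det = 1 := by
    rw [Matrix.det_of_upperTriangular hA]
    refine Finset.prod_eq_one fun i _ => ?_
    simp [Matrix.one_apply, hAdiag i]
  haveI : Invertible (1 - A) :=
    (1 - A).invertibleOfIsUnitDet (by rw [hdetA]; exact isUnit_one)
  set B := (1 - A)⁻¹ with hBdef
  have hB : B.BlockTriangular id := blockTriangular_inv_of_blockTriangular hA
  -- the diagonal of `B` is `1`
  have hBdiag : ∀ i, B i i = 1 := by
    intro i
    have hmul : B * (1 - A) = 1 :=
      Matrix.nonsing_inv_mul _ (by rw [hdetA]; exact isUnit_one)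
    have h := congrFun (congrFun hmul i) i
    rw [Matrix.mul_apply, Matrix.one_apply_eq] at h
    rw [Finset.sum_eq_single i] at h
    · simpa [Matrix.one_apply, hAdiag i] using h
    · intro k _ hk
      rcases lt_or_gt_of_ne hk with hki | hki
      · rw [hB (show (id i : Fin (m+1)) > id k from hki), zero_mul]
      · rw [hA (show (id k : Fin (m+1)) > id i from hki), mul_zero]
    · intro h; exact absurd (Finset.mem_univ i) h
  -- basic facts about `T`
  have hTtri : ∀ i j : Fin (m + 1), j < i → T i j = 0 := by
    intro i j hij
    show (if B i j = 0 then (0:ℝ) else 1) = 0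
    rw [if_pos (hB (show (id i : Fin (m+1)) > id j from hij))]
  have hTdiag : ∀ i : Fin (m + 1), T i i = 1 := by
    intro i
    show (if B i i = 0 then (0:ℝ) else 1) = 1
    rw [if_neg (by rw [hBdiag i]; exact one_ne_zero)]
  -- `Tb` is invertible
  have hTbtri : Tb.BlockTriangular id := by
    intro i j hij
    exact hTtri _ _ (by exact_mod_cast hij)
  have hTbdet : Tb.det = 1 := by
    rw [Matrix.det_of_upperTriangular hTbtri]
    refine Finset.prod_eq_one fun i _ => ?_
    exact hTdiag _
  have hTbunit : IsUnit Tb.det := by rw [hTbdet]; exact isUnit_one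
  have hTbw : Tb *ᵥ w = t := by
    show Tb *ᵥ (Tb⁻¹ *ᵥ t) = t
    rw [Matrix.mulVec_mulVec, Matrix.mul_nonsing_inv _ hTbunit, Matrix.one_mulVec]
  -- the fair rating as a linear combination of the `l q`'s
  have hF : ∀ γ : Fin m → ℝ,
      (∑ j ∈ Finset.univ.filter
        (fun j : Fin m => T (Fin.castSucc j) (Fin.last m) = 1), γ j) =
      ∑ q, w q * l γ q := by
    intro γ
    have h1 : (∑ j ∈ Finset.univ.filter
        (fun j : Fin m => T (Fin.castSucc j) (Fin.last m) = 1), γ j) =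
        ∑ j, t j * γ j := by
      rw [Finset.sum_filter]
      refine Finset.sum_congr rfl fun j _ => ?_
      by_cases hb : B (Fin.castSucc j) (Fin.last m) = 0
      · have ht0 : t j = 0 := by
          show (if B (Fin.castSucc j) (Fin.last m) = 0 then (0:ℝ) else 1) = 0
          rw [if_pos hb]
        have : T (Fin.castSucc j) (Fin.last m) ≠ 1 := by
          show ¬ ((if B (Fin.castSucc j) (Fin.last m) = 0 then (0:ℝ) else 1) = 1)
          rw [if_pos hb]; norm_num
        rw [if_neg this, ht0, zero_mul]
      · have ht1 : t j = 1 := by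
          show (if B (Fin.castSucc j) (Fin.last m) = 0 then (0:ℝ) else 1) = 1
          rw [if_neg hb]
        have : T (Fin.castSucc j) (Fin.last m) = 1 := ht1
        rw [if_pos this, ht1, one_mul]
    rw [h1, ← hTbw]
    simp only [Matrix.mulVec, dotProduct, Finset.sum_mul]
    rw [Finset.sum_comm]
    refine Finset.sum_congr rfl fun q _ => ?_
    show (∑ j, Tb j q * w q * γ j) = w q * ∑ j, Tb j q * γ j
    rw [Finset.mul_sum]
    exact Finset.sum_congr rfl fun j _ => by ring
  constructor
  · -- achievability implies the weights vanish off the neighbors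
    rintro ⟨g, hg⟩ j hAj
    have hTbT : IsUnit Tbᵀ.det := by rwa [Matrix.det_transpose]
    set γ : Fin m → ℝ := Tbᵀ⁻¹ *ᵥ (Pi.single j 1 : Fin m → ℝ) with hγ
    have hlγ : ∀ q, l γ q = (Pi.single j 1 : Fin m → ℝ) q := by
      intro q
      have h1 : l γ q = (Tbᵀ *ᵥ γ) q := by
        show (∑ k, Tb k q * γ k) = ∑ k, Tbᵀ q k * γ k
        exact Finset.sum_congr rfl fun k _ => rfl
      rw [h1, hγ, Matrix.mulVec_mulVec, Matrix.mul_nonsing_inv _ hTbT,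
        Matrix.one_mulVec]
    have hl0 : ∀ q, l (0 : Fin m → ℝ) q = 0 := by
      intro q
      show (∑ k, T (Fin.castSucc k) (Fin.castSucc q) * (0 : Fin m → ℝ) k) = 0
      simp
    have e1 := hg γ
    have e2 := hg 0
    rw [hF γ] at e1
    rw [hF 0] at e2
    have hsum1 : (∑ q, w q * l γ q) = w j := by
      rw [Finset.sum_congr rfl (fun q _ => by rw [hlγ q])]
      simp [Pi.single_apply, mul_ite, Finset.sum_ite_eq']
    have hsum0 : (∑ q, w q * l (0 : Fin m → ℝ) q) = 0 := by
      simp [hl0]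
    have hgeq : (fun q : {q : Fin m // A (Fin.castSucc q) (Fin.last m) = 1} =>
        l γ q.1) = fun q => l (0 : Fin m → ℝ) q.1 := by
      funext q
      rw [hlγ, hl0]
      have hne : q.1 ≠ j := by
        intro h
        have hq := q.2
        rw [h, hAj] at hq
        exact zero_ne_one hq
      exact Pi.single_eq_of_ne hne 1
    rw [hsum1] at e1
    rw [hsum0] at e2
    rw [e1, hgeq]
    exact e2.symm
  · -- the weights vanish off the neighbors implies achievability
    intro hw
    refine ⟨fun x => ∑ q : {q : Fin m // A (Fin.castSucc q) (Fin.last m) = 1},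
      w q.1 * x q, fun γ => ?_⟩
    rw [hF γ]
    have h1 : (∑ q, w q * l γ q) = ∑ q ∈ Finset.univ.filter
        (fun q : Fin m => A (Fin.castSucc q) (Fin.last m) = 1), w q * l γ q := by
      symm
      apply Finset.sum_filter_of_ne
      intro q _ hq
      by_contra hAq
      have hA0 : A (Fin.castSucc q) (Fin.last m) = 0 :=
        (h01 _ _).resolve_right hAq
      rw [hw q hA0, zero_mul] at hq
      exact hq rfl
    rw [h1, ← Finset.sum_subtype_eq_sum_filter
      (fun q : Fin m => w q * l γ q)
      (p := fun q : Fin m => A (Fin.castSucc q) (Fin.last m) = 1),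
      Finset.subtype_univ]
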